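/- (Ideal observability of the imperfect augmented system with invariant EKF; containment part of Theorem 5.) Fix g, p_F ∈ ℝ³ and R_G ∈ SO(3). Let T ∈ ℕ, δ₁, …, δ_T ∈ ℝ, and for each t ∈ {0, …, T} let R_{I,t}, R_{KF} ∈ ℝ^{3×3}, v_t, p_{I,t}, p_{f,t}, p_{G,t} ∈ ℝ³ and J_t, J'_t, J*_t ∈ ℝ^{2×3} be arbitrary (the true state at step t). Define A*_t as the 33×33 imperfect-system propagation matrix with the step-t values, Φ*_{t|0} = exp(δ_t A*_t) ⋯ exp(δ₁ A*₁) (with Φ*_{0|0} = I), the extended local Jacobian H_{L,t} = −J_t R_{I,t}ᵀ [0₃ 0₃ I₃ −I₃ 0₃ 0₃ 0₃ 0₃ 0₃ 0₃ 0₃], the current-frame map Jacobian H^C_t = −J'_t R_{I,t}ᵀ [−(R_G p_F)_× 0₃ I₃ 0₃ −I₃ (R_G p_F)_× 0₃ 0₃ 0₃ 0₃ −R_G], and the keyframe Jacobian H^{KF}_t = −J*_t R_{KF}ᵀ [0₃ 0₃ 0₃ 0₃ 0₃ 0₃ 0₃ 0₃ −(p_F)_× I₃ −I₃]. Then for every t: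 H_{L,t} Φ*_{t|0} N*₁ = 0, H^C_t Φ*_{t|0} N*₁ = 0, and H^{KF}_t Φ*_{t|0} N*₁ = 0; i.e., the columns of N*₁ lie in the right null space of the ideally evaluated observability matrix of the imperfect augmented system. -/

import Mathlib

open Matrix

abbrev V3 := Fin 3 → ℝ
abbrev M3 := Matrix (Fin 3) (Fin 3) ℝ

/-- The cross-product (skew-symmetric) matrix `(a)_×`. -/
def skew (a : V3) : M3 :=
  !![0, -a 2, a 1; a 2, 0, -a 0; -a 1, a 0, 0]

/-- Row/column index of the 33-dimensional right-invariant error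
`(ξ_θ, ξ_v, ξ_p, ξ_pf, ξ_pG, ξ_θG, ξ_bg, ξ_ba, ξ_θKF, ξ_pKF, ξ_F)`: 11 blocks of 3. -/
abbrev Idx33 := Fin 11 × Fin 3

/-- Column index for the 33×10 unobservable-direction matrix:
one single column followed by three 3-column blocks. -/
abbrev Cols10 := Fin 1 ⊕ Fin 3 × Fin 3

/-- 33×33 matrix from an 11×11 table of 3×3 blocks. -/
def bm11 (f : Fin 11 → Fin 11 → M3) : Matrix Idx33 Idx33 ℝ :=
  Matrix.of fun p q => f p.1 q.1 p.2 q.2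

/-- The 33×33 propagation matrix `A*` of the imperfect augmented system:
the upper-left 24×24 block is the perfect-system propagation matrix,
all other entries are zero. -/
def AStar (g : V3) (RI : M3) (v pI pf pG : V3) : Matrix Idx33 Idx33 ℝ :=
  bm11 ![![0, 0, 0, 0, 0, 0, -RI, 0, 0, 0, 0],
         ![skew g, 0, 0, 0, 0, 0, -(skew v * RI), -RI, 0, 0, 0],
         ![0, 1, 0, 0, 0, 0, -(skew pI * RI), 0, 0, 0, 0],
         ![0, 0, 0, 0, 0, 0, -(skew pf * RI), 0, 0, 0, 0],
         ![0, 0, 0, 0, 0, 0, -(skew pG * RI), 0, 0, 0, 0],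
         ![0, 0, 0, 0, 0, 0, 0, 0, 0, 0, 0],
         ![0, 0, 0, 0, 0, 0, 0, 0, 0, 0, 0],
         ![0, 0, 0, 0, 0, 0, 0, 0, 0, 0, 0],
         ![0, 0, 0, 0, 0, 0, 0, 0, 0, 0, 0],
         ![0, 0, 0, 0, 0, 0, 0, 0, 0, 0, 0],
         ![0, 0, 0, 0, 0, 0, 0, 0, 0, 0, 0]]

/-- The 33×10 unobservable-direction matrix `N*₁` (parametric in `R_G`; `N*₃` is the
same matrix evaluated at the first-estimate `R̂_{G0}`). -/
def NStar1 (g pF : V3) (RG : M3) : Matrix Idx33 Cols10 ℝ :=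
  Matrix.of fun p j =>
    Sum.elim
      (fun _ => (![g, 0, 0, 0, 0, g, 0, 0, 0, 0, 0] : Fin 11 → V3) p.1 p.2)
      (fun q =>
        (![![0, 0, 0], ![0, 0, 0], ![1, 0, 0], ![1, 0, 0], ![1, -RG, 0],
           ![0, 0, 1], ![0, 0, 0], ![0, 0, 0], ![0, 0, -RGᵀ], ![0, 1, 0],
           ![0, 1, skew pF * RGᵀ]] : Fin 11 → Fin 3 → M3) p.1 q.1 p.2 q.2) j

/-- A 2×33 measurement Jacobian `B ⬝ [f₀ ⋯ f₁₀]` from a 2×3 factor `B`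
and an 11-tuple of 3×3 blocks. -/
def rowJac (B : Matrix (Fin 2) (Fin 3) ℝ) (f : Fin 11 → M3) : Matrix (Fin 2) Idx33 ℝ :=
  Matrix.of fun r p => (B * f p.1) r p.2

/-- `SO(3)`: real 3×3 matrices with `Rᵀ R = I` and `det R = 1`. -/
def SO3 : Set M3 := {R | Rᵀ * R = 1 ∧ R.det = 1}

/-- The state-transition matrix `Φ*_{t|0} = exp(δ_t A*_t) ⋯ exp(δ₁ A*₁)`, `Φ*_{0|0} = I`. -/
noncomputable def PhiStar (δ : ℕ → ℝ) (As : ℕ → Matrix Idx33 Idx33 ℝ) :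
    ℕ → Matrix Idx33 Idx33 ℝ
  | 0 => 1
  | t + 1 => NormedSpace.exp (δ (t + 1) • As (t + 1)) * PhiStar δ As t

/-! ### Auxiliary definitions and lemmas -/

/-- The vector blocks of the first (gravity) column of `N*₁`. -/
def nvec (g : V3) : Fin 11 → V3 := ![g, 0, 0, 0, 0, g, 0, 0, 0, 0, 0]

/-- The 3×3 blocks of the last nine columns of `N*₁`. -/
def nblk (pF : V3) (RG : M3) : Fin 11 → Fin 3 → M3 :=
  ![![0, 0, 0], ![0, 0, 0], ![1, 0, 0], ![1, 0, 0], ![1, -RG, 0],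
    ![0, 0, 1], ![0, 0, 0], ![0, 0, 0], ![0, 0, -RGᵀ], ![0, 1, 0],
    ![0, 1, skew pF * RGᵀ]]

lemma NStar1_inl (g pF : V3) (RG : M3) (k : Fin 11) (c : Fin 3) (j : Fin 1) :
    NStar1 g pF RG (k, c) (Sum.inl j) = nvec g k c := rfl

lemma NStar1_inr (g pF : V3) (RG : M3) (k : Fin 11) (c : Fin 3) (q b : Fin 3) :
    NStar1 g pF RG (k, c) (Sum.inr (q, b)) = nblk pF RG k q c b := rfl

/-- A matrix with 3×3 row-block structure times `N*₁` is zero provided the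
block-level sums vanish. -/
lemma blocks_mul_NStar1_eq_zero {m : Type*} [Fintype m] (g pF : V3) (RG : M3)
    (W : Matrix m Idx33 ℝ) (wb : m → Fin 11 → V3)
    (hW : ∀ r k c, W r (k, c) = wb r k c)
    (h1 : ∀ r, ∑ k : Fin 11, (wb r k) ⬝ᵥ nvec g k = 0)
    (h2 : ∀ r q b, ∑ k : Fin 11, (nblk pF RG k q)ᵀ.mulVec (wb r k) b = 0) :
    W * NStar1 g pF RG = 0 := by
  ext r j
  rw [Matrix.mul_apply, Fintype.sum_prod_type]
  rcases j with j | ⟨q, b⟩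
  · simp only [hW, NStar1_inl, Matrix.zero_apply]
    exact h1 r
  · simp only [hW, NStar1_inr, Matrix.zero_apply]
    have hthis := h2 r q b
    rw [← hthis]
    refine Finset.sum_congr rfl fun k _ => ?_
    simp [Matrix.mulVec, dotProduct, Matrix.transpose_apply, mul_comm]

lemma bm11_mul_NStar1_eq_zero (g pF : V3) (RG : M3) (f : Fin 11 → Fin 11 → M3)
    (h1 : ∀ i, ∑ k : Fin 11, (f i k) *ᵥ nvec g k = 0)
    (h2 : ∀ i q, ∑ k : Fin 11, f i k * nblk pF RG k q = 0) :
    bm11 f * NStar1 g pF RG = 0 := by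
  refine blocks_mul_NStar1_eq_zero g pF RG _ (fun r k => f r.1 k r.2) (fun r k c => rfl) ?_ ?_
  · rintro ⟨i, a⟩
    have := congrFun (h1 i) a
    simpa [Finset.sum_apply, Matrix.mulVec, dotProduct] using this
  · rintro ⟨i, a⟩ q b
    have hthis := congrFun (congrFun (h2 i q) a) b
    simp only [Finset.sum_apply, Matrix.zero_apply] at hthis
    have heach : ∀ k, ((nblk pF RG k q)ᵀ *ᵥ (f i k) a) b = (f i k * nblk pF RG k q) a b := by
      intro k
      simp [Matrix.mul_apply, Matrix.mulVec, dotProduct, Matrix.transpose_apply, mul_comm]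
    simp only [heach]
    exact hthis

lemma rowJac_mul_NStar1_eq_zero (g pF : V3) (RG : M3) (B : Matrix (Fin 2) (Fin 3) ℝ)
    (f : Fin 11 → M3)
    (h1 : ∑ k : Fin 11, f k *ᵥ nvec g k = 0)
    (h2 : ∀ q, ∑ k : Fin 11, f k * nblk pF RG k q = 0) :
    rowJac B f * NStar1 g pF RG = 0 := by
  refine blocks_mul_NStar1_eq_zero g pF RG _ (fun r k => (B * f k) r) (fun r k c => rfl) ?_ ?_
  · intro r
    have hk : ∀ k, (B * f k) r ⬝ᵥ nvec g k = ∑ i : Fin 3, B r i * (f k *ᵥ nvec g k) i := by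
      intro k
      simp only [Matrix.mul_apply, dotProduct, Matrix.mulVec, Finset.sum_mul, Finset.mul_sum,
        mul_assoc]
      rw [Finset.sum_comm]
    simp only [hk]
    rw [Finset.sum_comm]
    have hz : ∀ i : Fin 3, ∑ k : Fin 11, (f k *ᵥ nvec g k) i = 0 := by
      intro i
      have := congrFun h1 i
      simpa [Finset.sum_apply] using this
    simp [← Finset.mul_sum, hz]
  · intro r q b
    have hk : ∀ k, (nblk pF RG k q)ᵀ.mulVec ((B * f k) r) b
        = ((B * (f k * nblk pF RG k q)) r) b := by
      intro k
      simp only [Matrix.mul_apply, Matrix.mulVec, dotProduct, Matrix.transpose_apply,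
        Finset.mul_sum, Finset.sum_mul, mul_assoc, mul_comm, mul_left_comm]
      rw [Finset.sum_comm]
    simp only [hk]
    have h3 : ∑ k : Fin 11, B * (f k * nblk pF RG k q) = 0 := by
      rw [← Matrix.mul_sum, h2, Matrix.mul_zero]
    have := congrFun (congrFun h3 r) b
    simpa [Matrix.sum_apply] using this

lemma skew_mulVec_self (a : V3) : skew a *ᵥ a = 0 := by
  funext i
  fin_cases i <;>
    simp [skew, Matrix.mulVec, dotProduct, Fin.sum_univ_three] <;> ring

lemma skew_conj (M : M3) (a : V3) : Mᵀ * skew (M *ᵥ a) * M = M.det • skew a := by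
  ext i j
  fin_cases i <;> fin_cases j <;>
    simp [skew, Matrix.det_fin_three, Matrix.mul_apply, Matrix.mulVec, dotProduct,
      Fin.sum_univ_three, Matrix.transpose_apply, Matrix.smul_apply] <;> ring

lemma skew_mulVec_SO3 {R : M3} (hR : R ∈ SO3) (a : V3) :
    skew (R *ᵥ a) = R * skew a * Rᵀ := by
  have h1 : Rᵀ * R = 1 := hR.1
  have h2 : R * Rᵀ = 1 := mul_eq_one_comm.mp h1
  have h3 := skew_conj R a
  calc skew (R *ᵥ a) = (R * Rᵀ) * skew (R *ᵥ a) * (R * Rᵀ) := by rw [h2]; simp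
    _ = R * (Rᵀ * skew (R *ᵥ a) * R) * Rᵀ := by noncomm_ring
    _ = R * (R.det • skew a) * Rᵀ := by rw [h3]
    _ = R * skew a * Rᵀ := by rw [hR.2]; simp [Matrix.mul_smul, Matrix.smul_mul]

lemma AStar_mul_NStar1 (g pF : V3) (RG RI : M3) (v pI pf pG : V3) :
    AStar g RI v pI pf pG * NStar1 g pF RG = 0 := by
  unfold AStar
  refine bm11_mul_NStar1_eq_zero g pF RG _ ?_ ?_
  · simp [Fin.forall_fin_succ, nvec, Fin.sum_univ_succ, skew_mulVec_self,
      Matrix.zero_mulVec, Matrix.mulVec_zero, Matrix.neg_mulVec]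
  · simp [Fin.forall_fin_succ, nblk, Fin.sum_univ_succ, Matrix.mul_zero, Matrix.zero_mul,
      Matrix.neg_mul, Matrix.mul_neg]

lemma exp_mul_of_mul_eq_zero (c : ℝ) (A : Matrix Idx33 Idx33 ℝ)
    (N : Matrix Idx33 Cols10 ℝ) (h : A * N = 0) :
    NormedSpace.exp (c • A) * N = N := by
  letI : SeminormedRing (Matrix Idx33 Idx33 ℝ) := Matrix.linftyOpSemiNormedRing
  letI : NormedRing (Matrix Idx33 Idx33 ℝ) := Matrix.linftyOpNormedRing
  letI : NormedAlgebra ℝ (Matrix Idx33 Idx33 ℝ) := Matrix.linftyOpNormedAlgebra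
  letI : NormedAddCommGroup (Matrix Idx33 Cols10 ℝ) := Matrix.normedAddCommGroup
  letI : NormedSpace ℝ (Matrix Idx33 Cols10 ℝ) := Matrix.normedSpace
  let L : Matrix Idx33 Idx33 ℝ →ₗ[ℝ] Matrix Idx33 Cols10 ℝ :=
    { toFun := fun X => X * N
      map_add' := fun a b => Matrix.add_mul a b N
      map_smul' := fun c a => Matrix.smul_mul c a N }
  let Lc : Matrix Idx33 Idx33 ℝ →L[ℝ] Matrix Idx33 Cols10 ℝ :=
    ⟨L, L.continuous_of_finiteDimensional⟩
  have hsum : Summable (fun n : ℕ => ((n.factorial : ℝ))⁻¹ • (c • A) ^ n) :=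
    NormedSpace.expSeries_summable' (c • A)
  have hmap : NormedSpace.exp (c • A) * N
      = ∑' n : ℕ, Lc (((n.factorial : ℝ))⁻¹ • (c • A) ^ n) := by
    rw [NormedSpace.exp_eq_tsum (𝕂 := ℝ)]
    exact Lc.map_tsum hsum
  rw [hmap]
  have hterm : ∀ n : ℕ, n ≠ 0 → Lc (((n.factorial : ℝ))⁻¹ • (c • A) ^ n) = 0 := by
    intro n hn
    obtain ⟨m, rfl⟩ := Nat.exists_eq_succ_of_ne_zero hn
    show (((m + 1).factorial : ℝ))⁻¹ • (c • A) ^ (m + 1) * N = 0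
    rw [Matrix.smul_mul, pow_succ, Matrix.mul_assoc, Matrix.smul_mul, h]
    simp
  rw [tsum_eq_single 0 hterm]
  show (((Nat.factorial 0 : ℕ) : ℝ))⁻¹ • (c • A) ^ 0 * N = N
  simp

lemma PhiStar_mul_NStar1 (g pF : V3) (RG : M3) (δ : ℕ → ℝ) (RI : ℕ → M3)
    (v pI pf pG : ℕ → V3) (t : ℕ) :
    PhiStar δ (fun s => AStar g (RI s) (v s) (pI s) (pf s) (pG s)) t * NStar1 g pF RG
      = NStar1 g pF RG := by
  induction t with
  | zero => simp [PhiStar]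
  | succ t ih =>
    rw [PhiStar, Matrix.mul_assoc, ih,
      exp_mul_of_mul_eq_zero _ _ _ (AStar_mul_NStar1 g pF RG _ _ _ _ _)]

/-- Ideal observability of the imperfect augmented system with the invariant EKF:
the columns of `N*₁` lie in the right null space of the ideally evaluated
observability matrix. -/
theorem ideal_imperfect_invariant_observability (g pF : V3) (RG : M3)
    (hRG : RG ∈ SO3) (T : ℕ) (δ : ℕ → ℝ) (RI RKF : ℕ → M3)
    (v pI pf pG : ℕ → V3) (J J' Jstar : ℕ → Matrix (Fin 2) (Fin 3) ℝ) :
    ∀ t ≤ T,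
      rowJac (-(J t * (RI t)ᵀ)) ![0, 0, 1, -1, 0, 0, 0, 0, 0, 0, 0] *
          PhiStar δ (fun s => AStar g (RI s) (v s) (pI s) (pf s) (pG s)) t *
          NStar1 g pF RG = 0 ∧
      rowJac (-(J' t * (RI t)ᵀ))
            ![-skew (RG *ᵥ pF), 0, 1, 0, -1, skew (RG *ᵥ pF), 0, 0, 0, 0, -RG] *
          PhiStar δ (fun s => AStar g (RI s) (v s) (pI s) (pf s) (pG s)) t *
          NStar1 g pF RG = 0 ∧
      rowJac (-(Jstar t * (RKF t)ᵀ))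
            ![0, 0, 0, 0, 0, 0, 0, 0, -skew pF, 1, -1] *
          PhiStar δ (fun s => AStar g (RI s) (v s) (pI s) (pf s) (pG s)) t *
          NStar1 g pF RG = 0 := by
  intro t _
  have hPhi := PhiStar_mul_NStar1 g pF RG δ RI v pI pf pG t
  have hskew := skew_mulVec_SO3 hRG pF
  refine ⟨?_, ?_, ?_⟩
  · rw [Matrix.mul_assoc, hPhi]
    refine rowJac_mul_NStar1_eq_zero g pF RG _ _ ?_ ?_
    · simp [nvec, Fin.sum_univ_succ, Matrix.zero_mulVec, Matrix.mulVec_zero,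
        Matrix.neg_mulVec]
    · simp [Fin.forall_fin_succ, nblk, Fin.sum_univ_succ, Matrix.neg_mul, Matrix.mul_neg,
        Matrix.mul_zero, Matrix.zero_mul]
  · rw [Matrix.mul_assoc, hPhi]
    refine rowJac_mul_NStar1_eq_zero g pF RG _ _ ?_ ?_
    · simp [nvec, Fin.sum_univ_succ, Matrix.zero_mulVec, Matrix.mulVec_zero,
        Matrix.neg_mulVec]
    · simp [Fin.forall_fin_succ, nblk, Fin.sum_univ_succ, hskew, Matrix.neg_mul,
        Matrix.mul_neg, Matrix.mul_assoc, Matrix.mul_zero, Matrix.zero_mul]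
  · rw [Matrix.mul_assoc, hPhi]
    refine rowJac_mul_NStar1_eq_zero g pF RG _ _ ?_ ?_
    · simp [nvec, Fin.sum_univ_succ, Matrix.zero_mulVec, Matrix.mulVec_zero,
        Matrix.neg_mulVec]
    · simp [Fin.forall_fin_succ, nblk, Fin.sum_univ_succ, Matrix.neg_mul, Matrix.mul_neg,
        Matrix.mul_assoc, Matrix.mul_zero, Matrix.zero_mul]
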